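/- Let κ be an infinite cardinal and B a complete Boolean algebra. If the forcing axiom FA_κ(B) fails, then every subset of 2^κ is B-Baire. -/

import Mathlib

open Classical

/-- An ultrafilter on a Boolean algebra `B`, viewed as a subset of `B`:
upward closed, closed under meets, omitting `⊥`, and containing exactly one of
`b`, `bᶜ` for every `b`. -/
def IsUltra {B : Type*} [BooleanAlgebra B] (G : Set B) : Prop :=
  (∀ a b : B, a ∈ G → a ≤ b → b ∈ G) ∧
  (∀ a b : B, a ∈ G → b ∈ G → a ⊓ b ∈ G) ∧
  (⊥ : B) ∉ G ∧
  ∀ b : B, (b ∈ G ∨ bᶜ ∈ G) ∧ ¬(b ∈ G ∧ bᶜ ∈ G)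

/-- The Stone space of a Boolean algebra: the set of its ultrafilters. -/
def StoneSp (B : Type*) [BooleanAlgebra B] : Type _ :=
  {G : Set B // IsUltra G}

/-- The basic (cl)open set `O_b` of the Stone space. -/
def basicOpen {B : Type*} [BooleanAlgebra B] (b : B) : Set (StoneSp B) :=
  {G : StoneSp B | b ∈ G.1}

/-- The Stone topology, generated by the sets `O_b`. -/
instance {B : Type*} [BooleanAlgebra B] : TopologicalSpace (StoneSp B) :=
  TopologicalSpace.generateFrom {S : Set (StoneSp B) | ∃ b : B, S = basicOpen b}

/-- A set is `κ`-meager if it is a union of `κ`-many nowhere dense sets. -/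
def KMeager (κ : Type*) {X : Type*} [TopologicalSpace X] (A : Set X) : Prop :=
  ∃ F : κ → Set X, (∀ i, IsNowhereDense (F i)) ∧ A = ⋃ i, F i

/-- A set has the `κ`-Baire property if it differs from an open set by a
`κ`-meager set. -/
def KBaireProperty (κ : Type*) {X : Type*} [TopologicalSpace X] (A : Set X) : Prop :=
  ∃ U : Set X, IsOpen U ∧ KMeager κ (symmDiff A U)

/-- `D` is a dense subset of the poset `P`. -/
def DenseIn {P : Type*} [Preorder P] (D : Set P) : Prop :=
  ∀ p : P, ∃ d ∈ D, d ≤ p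

/-- The forcing axiom `FA_κ(P)`: every κ-indexed family of dense subsets of `P`
admits a filter meeting all of them. -/
def ForcingAxiom (κ P : Type*) [Preorder P] : Prop :=
  ∀ D : κ → Set P, (∀ i, DenseIn (D i)) →
    ∃ g : Order.PFilter P, ∀ i, ∃ p ∈ g, p ∈ D i

section Aux

variable {B : Type*} [BooleanAlgebra B]

/-- Every nonzero element of a Boolean algebra lies in some ultrafilter. -/
theorem exists_ultra (b : B) (hb : b ≠ ⊥) : ∃ G : Set B, IsUltra G ∧ b ∈ G := by
  -- the collection of proper filters containing b
  set S : Set (Set B) :=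
    {F | (∀ x y : B, x ∈ F → x ≤ y → y ∈ F) ∧ (∀ x y : B, x ∈ F → y ∈ F → x ⊓ y ∈ F) ∧
      (⊥ : B) ∉ F ∧ b ∈ F} with hS
  have h0 : {c : B | b ≤ c} ∈ S := by
    refine ⟨fun x y hx hxy => le_trans hx hxy, fun x y hx hy => le_inf hx hy, ?_, le_refl b⟩
    intro h; exact hb (le_bot_iff.mp h)
  obtain ⟨G, -, hGS, hGmax⟩ :
      ∃ G, {c : B | b ≤ c} ⊆ G ∧ G ∈ S ∧ ∀ F ∈ S, G ⊆ F → F = G := by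
    have hch : ∀ c ⊆ S, IsChain (· ⊆ ·) c → c.Nonempty → ∃ ub ∈ S, ∀ s ∈ c, s ⊆ ub := by
      intro c hcS hchain hcne
      obtain ⟨F0, hF0⟩ := hcne
      refine ⟨⋃₀ c, ⟨?_, ?_, ?_, ?_⟩, fun s hs => Set.subset_sUnion_of_mem hs⟩
      · rintro x y ⟨F, hF, hxF⟩ hxy
        exact ⟨F, hF, (hcS hF).1 x y hxF hxy⟩
      · rintro x y ⟨F, hF, hxF⟩ ⟨F', hF', hyF'⟩
        rcases hchain.total hF hF' with h | h
        · exact ⟨F', hF', (hcS hF').2.1 x y (h hxF) hyF'⟩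
        · exact ⟨F, hF, (hcS hF).2.1 x y hxF (h hyF')⟩
      · rintro ⟨F, hF, hbot⟩; exact (hcS hF).2.2.1 hbot
      · exact ⟨F0, hF0, (hcS hF0).2.2.2⟩
    obtain ⟨G, h1, h2⟩ := zorn_subset_nonempty S hch _ h0
    exact ⟨G, h1, h2.1, fun F hF hGF => subset_antisymm (h2.2 hF hGF) hGF⟩
  obtain ⟨hup, hmeet, hbot, hbG⟩ := hGS
  refine ⟨G, ⟨hup, hmeet, hbot, ?_⟩, hbG⟩
  intro c
  constructor
  · by_contra h
    push_neg at h
    obtain ⟨hc, hcc⟩ := h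
    -- extend G by c
    set F : Set B := {x | ∃ g ∈ G, g ⊓ c ≤ x} with hF
    have hGF : G ⊆ F := fun g hg => ⟨g, hg, inf_le_left⟩
    have hFS : F ∈ S := by
      refine ⟨?_, ?_, ?_, hGF hbG⟩
      · rintro x y ⟨g, hg, hgx⟩ hxy; exact ⟨g, hg, le_trans hgx hxy⟩
      · rintro x y ⟨g, hg, hgx⟩ ⟨g', hg', hgy⟩
        refine ⟨g ⊓ g', hmeet _ _ hg hg', ?_⟩
        have : g ⊓ g' ⊓ c ≤ (g ⊓ c) ⊓ (g' ⊓ c) := by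
          simp only [le_inf_iff]
          exact ⟨⟨le_trans inf_le_left inf_le_left, inf_le_right⟩,
            ⟨le_trans inf_le_left inf_le_right, inf_le_right⟩⟩
        exact le_trans this (inf_le_inf hgx hgy)
      · rintro ⟨g, hg, hgbot⟩
        have hgc : Disjoint g c := disjoint_iff.mpr (le_bot_iff.mp hgbot)
        exact hcc (hup g cᶜ hg (le_compl_iff_disjoint_right.mpr hgc))
    have hFG : F = G := hGmax F hFS hGF
    exact hc (hFG ▸ (⟨b, hbG, inf_le_right⟩ : c ∈ F))
  · rintro ⟨hc, hcc⟩
    exact hbot (by simpa using hmeet _ _ hc hcc)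

theorem mem_top_ultra {G : Set B} (h : IsUltra G) : (⊤ : B) ∈ G := by
  rcases (h.2.2.2 ⊤).1 with hh | hh
  · exact hh
  · exact absurd (by simpa using hh) h.2.2.1

theorem basicOpen_isOpen (b : B) : IsOpen (basicOpen b) :=
  TopologicalSpace.isOpen_generateFrom_of_mem ⟨b, rfl⟩

theorem basicOpen_inter (a b : B) : basicOpen a ∩ basicOpen b = basicOpen (a ⊓ b) := by
  ext G
  constructor
  · rintro ⟨ha, hb⟩; exact G.2.2.1 a b ha hb
  · intro h; exact ⟨G.2.1 _ a h inf_le_left, G.2.1 _ b h inf_le_right⟩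

theorem basicOpen_top : basicOpen (⊤ : B) = (Set.univ : Set (StoneSp B)) :=
  Set.eq_univ_of_forall fun G => mem_top_ultra G.2

theorem sInter_finite_basic {f : Set (Set (StoneSp B))} (hf : f.Finite) :
    f ⊆ {S | ∃ b : B, S = basicOpen b} → ∃ b : B, ⋂₀ f = basicOpen b := by
  refine Set.Finite.induction_on
    (motive := fun f _ => f ⊆ {S | ∃ b : B, S = basicOpen b} → ∃ b : B, ⋂₀ f = basicOpen b)
    f hf (fun _ => ⟨⊤, by simp [basicOpen_top]⟩) ?_
  rintro t f - - ih hsub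
  obtain ⟨a, ha⟩ := hsub (Set.mem_insert t f)
  obtain ⟨b, hb⟩ := ih fun S hS => hsub (Set.mem_insert_of_mem _ hS)
  exact ⟨a ⊓ b, by rw [Set.sInter_insert, ha, hb, basicOpen_inter]⟩

end Aux

/-- if `FA_κ(B)` fails then every subset of `2^κ` is `B`-Baire,
i.e. for every continuous `f : St(B) → 2^κ` the preimage `f⁻¹(A)` has the
κ-Baire property. -/
theorem statement12 {κ B : Type*} [Infinite κ] [CompleteBooleanAlgebra B]
    (hFA : ¬ ForcingAxiom κ {b : B // b ≠ ⊥}) (A : Set (κ → Bool)) :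
    ∀ f : StoneSp B → κ → Bool, Continuous f →
      KBaireProperty κ (f ⁻¹' A) := by
  intro f hf
  rw [ForcingAxiom] at hFA
  push_neg at hFA
  obtain ⟨D, hDdense, hD⟩ := hFA
  set U : κ → Set (StoneSp B) :=
    fun i => ⋃ d ∈ D i, basicOpen (d : {b : B // b ≠ ⊥}).1 with hU
  have hUopen : ∀ i, IsOpen (U i) :=
    fun i => isOpen_biUnion fun d _ => basicOpen_isOpen _
  have hUdense : ∀ i, Dense (U i) := by
    intro i
    rw [dense_iff_inter_open]
    intro O hO hOne
    obtain ⟨G, hG⟩ := hOne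
    obtain ⟨t, ht, hGt, htO⟩ :=
      (TopologicalSpace.isTopologicalBasis_of_subbasis rfl).exists_subset_of_mem_open hG hO
    obtain ⟨f0, ⟨hf0fin, hf0sub⟩, rfl⟩ := ht
    obtain ⟨b, hb⟩ := sInter_finite_basic hf0fin hf0sub
    change G ∈ ⋂₀ f0 at hGt
    change ⋂₀ f0 ⊆ O at htO
    rw [hb] at hGt htO
    have hbne : b ≠ ⊥ := fun h => G.2.2.2.1 (h ▸ hGt)
    obtain ⟨d, hdD, hdb⟩ := hDdense i (⟨b, hbne⟩ : {b : B // b ≠ ⊥})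
    obtain ⟨H, hH, hdH⟩ := exists_ultra d.1 d.2
    refine ⟨⟨H, hH⟩, htO ?_, Set.mem_biUnion hdD hdH⟩
    exact hH.1 d.1 b hdH hdb
  have hcover : ∀ G : StoneSp B, ∃ i, G ∉ U i := by
    intro G
    have hpf : Order.IsPFilter {p : {b : B // b ≠ ⊥} | p.1 ∈ G.1} := by
      refine Order.IsPFilter.of_def ?_ ?_ ?_
      · have htop := mem_top_ultra G.2
        have hne : (⊤ : B) ≠ ⊥ := fun h => G.2.2.2.1 (h ▸ htop)
        exact ⟨⟨⊤, hne⟩, htop⟩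
      · rintro p hp q hq
        have hm : p.1 ⊓ q.1 ∈ G.1 := G.2.2.1 _ _ hp hq
        have hne : p.1 ⊓ q.1 ≠ ⊥ := fun h => G.2.2.2.1 (h ▸ hm)
        exact ⟨⟨p.1 ⊓ q.1, hne⟩, hm, inf_le_left, inf_le_right⟩
      · intro p q hpq hp
        exact G.2.1 p.1 q.1 hp hpq
    obtain ⟨i, hi⟩ := hD hpf.toPFilter
    refine ⟨i, fun hGU => ?_⟩
    obtain ⟨d, hdD, hdG⟩ := Set.mem_iUnion₂.mp hGU
    exact hi d hdG hdD
  refine ⟨∅, isOpen_empty, ?_⟩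
  have he : symmDiff (f ⁻¹' A) (∅ : Set (StoneSp B)) = f ⁻¹' A := by
    simp [symmDiff]
  rw [he]
  refine ⟨fun i => (U i)ᶜ ∩ f ⁻¹' A, fun i => ?_, ?_⟩
  · unfold IsNowhereDense
    have h1 : closure ((U i)ᶜ ∩ f ⁻¹' A) ⊆ (U i)ᶜ := by
      refine closure_minimal Set.inter_subset_left (hUopen i).isClosed_compl
    refine Set.eq_empty_of_subset_empty ?_
    calc interior (closure ((U i)ᶜ ∩ f ⁻¹' A)) ⊆ interior (U i)ᶜ := interior_mono h1
      _ = (closure (U i))ᶜ := by rw [interior_compl]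
      _ = ∅ := by rw [(hUdense i).closure_eq, Set.compl_univ]
  · ext G
    simp only [Set.mem_iUnion, Set.mem_inter_iff, Set.mem_compl_iff, Set.mem_preimage]
    constructor
    · intro hA
      obtain ⟨i, hi⟩ := hcover G
      exact ⟨i, hi, hA⟩
    · rintro ⟨i, -, hA⟩; exact hA
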